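/- Let n, m be nonnegative integers and a ∉ ℤ. Then 2F1(-n, a; m+1; z) = (m!·(m+1-a)_n/(m+n)!) · z^{-m} · 2F1(-m-n, a-m; a-m-n; 1-z), valid for z ≠ 0. -/

import Mathlib

open Finset

noncomputable def poch (x : ℂ) (k : ℕ) : ℂ := (ascPochhammer ℂ k).eval x

/-- Terminating Gauss hypergeometric series `2F1(-n, b; c; z)` as a finite sum. -/
noncomputable def hyp (n : ℕ) (b c : ℂ) (z : ℂ) : ℂ :=
  ∑ k ∈ Finset.range (n + 1),
    poch (-(n : ℂ)) k * poch b k / (poch c k * (Nat.factorial k : ℂ)) * z ^ k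

section Helpers
open Polynomial Nat

lemma poch_zero (x : ℂ) : poch x 0 = 1 := by simp [poch]

lemma poch_succ (x : ℂ) (k : ℕ) : poch x (k+1) = poch x k * (x + k) :=
  ascPochhammer_succ_eval k x

lemma poch_succ_left (x : ℂ) (k : ℕ) : poch x (k+1) = x * poch (x+1) k := by
  unfold poch
  rw [ascPochhammer_succ_left, Polynomial.eval_mul, Polynomial.eval_X, Polynomial.eval_comp]
  simp

lemma poch_prod (x : ℂ) (k : ℕ) : poch x k = ∏ i ∈ range k, (x + i) := by
  induction k with
  | zero => simp [poch_zero]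
  | succ k ih => rw [poch_succ, ih, prod_range_succ]

lemma poch_add (x : ℂ) (j k : ℕ) : poch x (j + k) = poch x j * poch (x + j) k := by
  unfold poch
  rw [← ascPochhammer_mul, Polynomial.eval_mul, Polynomial.eval_comp]
  simp

lemma poch_reflect (x : ℂ) (k : ℕ) : poch x k = (-1)^k * poch (1 - x - k) k := by
  rw [poch_prod, poch_prod, ← Finset.prod_range_reflect (fun i => (1 - x - k + i))]
  rw [show ((-1:ℂ))^k = ∏ _i ∈ range k, (-1:ℂ) by simp, ← Finset.prod_mul_distrib]
  apply Finset.prod_congr rfl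
  intro i hi
  simp only [mem_range] at hi
  have : ((k - 1 - i : ℕ) : ℂ) = (k : ℂ) - 1 - i := by
    have hik : i ≤ k - 1 := Nat.le_sub_one_of_lt hi
    push_cast [Nat.sub_sub, Nat.cast_sub (by omega : 1 + i ≤ k)]
    ring
  rw [this]; ring

lemma poch_eq_zero (x : ℂ) (k : ℕ) (h : ∃ i < k, x + i = 0) : poch x k = 0 := by
  obtain ⟨i, hi, hx⟩ := h
  rw [poch_prod]
  exact Finset.prod_eq_zero (Finset.mem_range.mpr hi) hx

lemma poch_ne_zero (x : ℂ) (hx : ∀ j : ℤ, x ≠ j) (k : ℕ) : poch x k ≠ 0 := by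
  rw [poch_prod]
  apply Finset.prod_ne_zero_iff.mpr
  intro i _
  intro h
  apply hx (-i)
  rw [eq_neg_of_add_eq_zero_left h]
  push_cast; ring

lemma poch_nat_factorial (m k : ℕ) : (m ! : ℂ) * poch ((m:ℂ)+1) k = ((m+k)! : ℂ) := by
  simpa [poch] using factorial_mul_ascPochhammer ℂ m k

lemma poch_cast_ne_zero (m k : ℕ) : poch ((m:ℂ)+1) k ≠ 0 := by
  intro h
  have h2 := poch_nat_factorial m k
  rw [h, mul_zero] at h2
  exact Nat.cast_ne_zero.mpr (Nat.factorial_ne_zero (m+k)) h2.symm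

lemma poch_neg_nat (n k : ℕ) (h : k ≤ n) :
    poch (-(n:ℂ)) k = (-1)^k * (k ! : ℂ) * (n.choose k : ℂ) := by
  have h1 : (1 : ℂ) - (-(n:ℂ)) - k = ((n-k : ℕ) : ℂ) + 1 := by
    push_cast [Nat.cast_sub h]; ring
  have h2 := poch_nat_factorial (n-k) k
  rw [Nat.sub_add_cancel h] at h2
  have h3 : (n.choose k : ℂ) * (k ! : ℂ) * ((n-k)! : ℂ) = (n ! : ℂ) := by
    exact_mod_cast congrArg Nat.cast (Nat.choose_mul_factorial_mul_factorial h)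
  have hnz : ((n-k)! : ℂ) ≠ 0 := Nat.cast_ne_zero.mpr (Nat.factorial_ne_zero _)
  rw [poch_reflect, h1]
  have key : ((n-k)! : ℂ) * poch (((n-k : ℕ) : ℂ) + 1) k
      = ((n-k)! : ℂ) * ((k ! : ℂ) * (n.choose k : ℂ)) := by
    rw [h2]; linear_combination -h3
  rw [mul_left_cancel₀ hnz key]; ring

lemma vand (n : ℕ) : ∀ x c : ℂ,
    ∑ k ∈ range (n+1), (-1:ℂ)^k * (n.choose k : ℂ) * poch x k * poch (c + k) (n - k)
      = poch (c - x) n := by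
  induction n with
  | zero => intro x c; simp [poch_zero]
  | succ n ih =>
    intro x c
    set f : ℕ → ℂ := fun k => (-1:ℂ)^k * ((n+1).choose k : ℂ) * poch x k * poch (c + k) (n+1-k) with hf
    set w : ℕ → ℂ := fun k => (-1:ℂ)^k * (n.choose k : ℂ) * poch x k * poch (c + k) (n+1-k) with hw
    set u : ℕ → ℂ := fun k =>
      -((-1:ℂ)^k * (n.choose k : ℂ) * poch x (k+1) * poch (c + ((k:ℂ)+1)) (n-k)) with hu
    have cast1 : ∀ k : ℕ, ((k+1 : ℕ) : ℂ) = (k:ℂ)+1 := by intro k; push_cast; ring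
    have hfu : ∀ k, f (k+1) = w (k+1) + u k := by
      intro k
      simp only [hf, hw, hu, Nat.choose_succ_succ, Nat.succ_sub_succ, cast1]
      push_cast
      ring
    have hwtop : w (n+1) = 0 := by simp [hw, Nat.choose_succ_self]
    calc ∑ k ∈ range (n+1+1), f k
        = ∑ k ∈ range (n+1), f (k+1) + f 0 := Finset.sum_range_succ' f (n+1)
      _ = ∑ k ∈ range (n+1), (w (k+1) + u k) + w 0 := by
          rw [Finset.sum_congr rfl (fun k _ => hfu k)]
          congr 1
          simp [hf, hw]
      _ = (∑ k ∈ range (n+1), w (k+1) + w 0) + ∑ k ∈ range (n+1), u k := by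
          rw [Finset.sum_add_distrib]; ring
      _ = ∑ k ∈ range (n+1+1), w k + ∑ k ∈ range (n+1), u k := by
          rw [Finset.sum_range_succ' w (n+1)]
      _ = ∑ k ∈ range (n+1), (w k + u k) := by
          rw [Finset.sum_range_succ w (n+1), hwtop, add_zero, Finset.sum_add_distrib]
      _ = ∑ k ∈ range (n+1), (c - x) * ((-1:ℂ)^k * (n.choose k : ℂ) * poch x k * poch ((c+1) + k) (n - k)) := by
          apply Finset.sum_congr rfl
          intro k hk
          have hkn : k ≤ n := Nat.lt_succ_iff.mp (Finset.mem_range.mp hk)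
          simp only [hw, hu]
          have e1 : c + ((k:ℂ)+1) = (c + (k:ℂ)) + 1 := by ring
          have e2 : c + 1 + (k:ℂ) = (c + (k:ℂ)) + 1 := by ring
          rw [e1, e2, poch_succ x k, show n+1-k = (n-k)+1 from (Nat.succ_sub hkn),
            poch_succ_left (c+(k:ℂ)) (n-k)]
          ring
      _ = poch (c - x) (n+1) := by
          rw [← Finset.mul_sum, ih x (c+1), poch_succ_left (c-x) n,
            show (c-x)+1 = c+1-x by ring]

lemma claimA (n m j k : ℕ) (hk : k ≤ n) (hj : j ≤ m + n) :
    ((m+k).choose j : ℂ) * (j ! : ℂ) * ((m+n-j)! : ℂ)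
      = poch ((m:ℂ)+(k:ℂ)-(j:ℂ)+1) (n-k) * ((m+k)! : ℂ) := by
  rcases le_or_gt j (m+k) with hjk | hjk
  · have c1 : ((m+k).choose j * (j !) * ((m+k-j)!) : ℕ) = ((m+k)! : ℕ) :=
      Nat.choose_mul_factorial_mul_factorial hjk
    have c2 : (((m+k-j)!) : ℂ) * poch (((m+k-j : ℕ):ℂ)+1) (n-k) = ((m+n-j)! : ℂ) := by
      have := poch_nat_factorial (m+k-j) (n-k)
      rwa [show m+k-j+(n-k) = m+n-j by omega] at this
    have hcast : ((m+k-j : ℕ) : ℂ) + 1 = (m:ℂ)+(k:ℂ)-(j:ℂ)+1 := by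
      push_cast [Nat.cast_sub hjk]; ring
    rw [hcast] at c2
    have hnz : (((m+k-j)!) : ℂ) ≠ 0 := Nat.cast_ne_zero.mpr (Nat.factorial_ne_zero _)
    apply mul_left_cancel₀ hnz
    calc ((m+k-j)! : ℂ) * (((m+k).choose j : ℂ) * (j ! : ℂ) * ((m+n-j)! : ℂ))
        = (((m+k).choose j : ℂ) * (j ! : ℂ) * ((m+k-j)! : ℂ)) * ((m+n-j)! : ℂ) := by ring
      _ = ((m+k)! : ℂ) * ((m+n-j)! : ℂ) := by
          norm_cast; rw [c1]
      _ = ((m+k-j)! : ℂ) * (poch ((m:ℂ)+(k:ℂ)-(j:ℂ)+1) (n-k) * ((m+k)! : ℂ)) := by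
          rw [← c2]; ring
  · rw [Nat.choose_eq_zero_of_lt hjk]
    have : poch ((m:ℂ)+(k:ℂ)-(j:ℂ)+1) (n-k) = 0 := by
      apply poch_eq_zero
      refine ⟨j - (m+k+1), by omega, ?_⟩
      push_cast [Nat.cast_sub (by omega : m+k+1 ≤ j)]
      ring
    rw [this]; ring

lemma claimB (m n j : ℕ) (a : ℂ) :
    poch ((m:ℂ)+1-(j:ℂ)-a) n * poch (a-(m:ℂ)-(n:ℂ)) j
      = poch ((m:ℂ)+1-a) n * poch (a-(m:ℂ)) j := by
  have r1 : poch ((m:ℂ)+1-(j:ℂ)-a) n = (-1)^n * poch ((a-(m:ℂ)-(n:ℂ))+(j:ℂ)) n := by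
    rw [poch_reflect ((m:ℂ)+1-(j:ℂ)-a) n]; congr 2; ring
  have r2 : poch ((m:ℂ)+1-a) n = (-1)^n * poch (a-(m:ℂ)-(n:ℂ)) n := by
    rw [poch_reflect ((m:ℂ)+1-a) n]; congr 2; ring
  have p1 := poch_add (a-(m:ℂ)-(n:ℂ)) j n
  have p2 := poch_add (a-(m:ℂ)-(n:ℂ)) n j
  rw [show (a-(m:ℂ)-(n:ℂ))+(n:ℂ) = a-(m:ℂ) by ring] at p2
  rw [show j+n = n+j from add_comm j n] at p1
  rw [r1, r2]
  linear_combination ((-1:ℂ)^n) * (p2 - p1)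

lemma sub_nat_ne (a : ℂ) (ha : ∀ j : ℤ, a ≠ (j:ℂ)) (m n : ℕ) :
    ∀ i : ℤ, a - (m:ℂ) - (n:ℂ) ≠ (i:ℂ) := by
  intro i h
  apply ha (i + m + n)
  have : a = (i:ℂ) + (m:ℂ) + (n:ℂ) := by linear_combination h
  rw [this]; push_cast; ring

lemma coeff_id (n m j : ℕ) (hj : j ≤ m + n) (a : ℂ) (ha : ∀ i : ℤ, a ≠ (i:ℂ)) :
    ∑ k ∈ range (n+1), poch (-(n:ℂ)) k * poch a k / (poch ((m:ℂ)+1) k * (k ! : ℂ))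
        * ((-1:ℂ)^j * ((m+k).choose j : ℂ))
    = (m ! : ℂ) * poch ((m:ℂ)+1-a) n / ((m+n)! : ℂ)
        * (poch (-((m+n : ℕ):ℂ)) j * poch (a-(m:ℂ)) j / (poch (a-(m:ℂ)-(n:ℂ)) j * (j ! : ℂ))) := by
  have hfj : (j ! : ℂ) ≠ 0 := Nat.cast_ne_zero.mpr (Nat.factorial_ne_zero _)
  have hfmnj : ((m+n-j)! : ℂ) ≠ 0 := Nat.cast_ne_zero.mpr (Nat.factorial_ne_zero _)
  have hfmn : ((m+n)! : ℂ) ≠ 0 := Nat.cast_ne_zero.mpr (Nat.factorial_ne_zero _)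
  have hpa : poch (a-(m:ℂ)-(n:ℂ)) j ≠ 0 := poch_ne_zero _ (sub_nat_ne a ha m n) j
  have lhs_eq : ∑ k ∈ range (n+1), poch (-(n:ℂ)) k * poch a k / (poch ((m:ℂ)+1) k * (k ! : ℂ))
        * ((-1:ℂ)^j * ((m+k).choose j : ℂ))
      = ((-1:ℂ)^j * (m ! : ℂ) / ((j ! : ℂ) * ((m+n-j)! : ℂ))) *
        ∑ k ∈ range (n+1), (-1:ℂ)^k * (n.choose k : ℂ) * poch a k * poch (((m:ℂ)-(j:ℂ)+1) + k) (n - k) := by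
    rw [Finset.mul_sum]
    apply Finset.sum_congr rfl
    intro k hk
    have hkn : k ≤ n := Nat.lt_succ_iff.mp (Finset.mem_range.mp hk)
    have hfk : (k ! : ℂ) ≠ 0 := Nat.cast_ne_zero.mpr (Nat.factorial_ne_zero _)
    have hfm : (m ! : ℂ) ≠ 0 := Nat.cast_ne_zero.mpr (Nat.factorial_ne_zero _)
    have hpm := poch_cast_ne_zero m k
    have hA := claimA n m j k hkn hj
    rw [poch_neg_nat n k hkn,
      show ((m:ℂ)-(j:ℂ)+1) + (k:ℂ) = (m:ℂ)+(k:ℂ)-(j:ℂ)+1 by ring]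
    have hP := poch_nat_factorial m k
    field_simp
    linear_combination ((n.choose k : ℂ)*poch a k) * hA
      - ((n.choose k : ℂ)*poch a k*poch ((m:ℂ)+(k:ℂ)-(j:ℂ)+1) (n-k)) * hP
  rw [lhs_eq, vand n a ((m:ℂ)-(j:ℂ)+1)]
  have hB := claimB m n j a
  rw [show (m:ℂ)-(j:ℂ)+1-a = (m:ℂ)+1-(j:ℂ)-a by ring]
  have hneg : poch (-((m+n : ℕ):ℂ)) j = (-1)^j * (j ! : ℂ) * ((m+n).choose j : ℂ) :=
    poch_neg_nat (m+n) j hj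
  have hch : ((m+n).choose j : ℂ) * (j ! : ℂ) * ((m+n-j)! : ℂ) = ((m+n)! : ℂ) := by
    exact_mod_cast congrArg Nat.cast (Nat.choose_mul_factorial_mul_factorial hj)
  rw [hneg]
  field_simp
  linear_combination ((m ! :ℂ) * ((m+n)! :ℂ)) * hB
    - ((m ! :ℂ)*poch ((m:ℂ)+1-a) n * poch (a-(m:ℂ)) j) * hch

end Helpers

open Nat in
theorem terminating_extra_transform_two (n m : ℕ) (a : ℂ) (ha : ∀ j : ℤ, a ≠ (j : ℂ))
    (z : ℂ) (hz0 : z ≠ 0) :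
    hyp n a ((m : ℂ) + 1) z =
      (Nat.factorial m : ℂ) * poch ((m : ℂ) + 1 - a) n / (Nat.factorial (m + n) : ℂ) *
        z ^ (-(m : ℤ)) * hyp (m + n) (a - m) (a - m - n) (1 - z) := by
  have hzm : z ^ m ≠ 0 := pow_ne_zero _ hz0
  have expand : ∀ N : ℕ, z ^ N = ∑ j ∈ range (N+1), ((N.choose j : ℂ)) * ((-1:ℂ)^j * (1-z)^j) := by
    intro N
    rw [show z = (-(1-z)) + 1 by ring, add_pow]
    apply Finset.sum_congr rfl
    intro j _
    rw [neg_pow]; ring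
  have key : hyp n a ((m:ℂ)+1) z * z ^ m
      = (m ! : ℂ) * poch ((m:ℂ)+1-a) n / ((m+n)! : ℂ) * hyp (m+n) (a-(m:ℂ)) (a-(m:ℂ)-(n:ℂ)) (1-z) := by
    unfold hyp
    rw [Finset.sum_mul]
    calc ∑ k ∈ range (n+1), poch (-(n:ℂ)) k * poch a k / (poch ((m:ℂ)+1) k * (k ! : ℂ)) * z ^ k * z ^ m
        = ∑ k ∈ range (n+1), ∑ j ∈ range (m+n+1),
            poch (-(n:ℂ)) k * poch a k / (poch ((m:ℂ)+1) k * (k ! : ℂ))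
              * ((-1:ℂ)^j * ((m+k).choose j : ℂ)) * (1-z)^j := by
          apply Finset.sum_congr rfl
          intro k hk
          have hkn : k ≤ n := Nat.lt_succ_iff.mp (Finset.mem_range.mp hk)
          have hz : z ^ k * z ^ m = z ^ (m+k) := by rw [← pow_add]; ring_nf
          rw [mul_assoc, hz, expand (m+k)]
          rw [← Finset.sum_subset (Finset.range_subset_range.mpr (by omega : m+k+1 ≤ m+n+1))
            (fun j _ hj => by
              rw [Nat.choose_eq_zero_of_lt (by simpa using hj : m+k < j)]
              simp)]
          rw [Finset.mul_sum]
          apply Finset.sum_congr rfl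
          intro j _
          ring
      _ = ∑ j ∈ range (m+n+1), (∑ k ∈ range (n+1),
            poch (-(n:ℂ)) k * poch a k / (poch ((m:ℂ)+1) k * (k ! : ℂ))
              * ((-1:ℂ)^j * ((m+k).choose j : ℂ))) * (1-z)^j := by
          rw [Finset.sum_comm]
          apply Finset.sum_congr rfl
          intro j _
          rw [Finset.sum_mul]
      _ = ∑ j ∈ range (m+n+1), ((m ! : ℂ) * poch ((m:ℂ)+1-a) n / ((m+n)! : ℂ)
            * (poch (-((m+n : ℕ):ℂ)) j * poch (a-(m:ℂ)) j / (poch (a-(m:ℂ)-(n:ℂ)) j * (j ! : ℂ)))) * (1-z)^j := by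
          apply Finset.sum_congr rfl
          intro j hj
          rw [coeff_id n m j (Nat.lt_succ_iff.mp (Finset.mem_range.mp hj)) a ha]
      _ = (m ! : ℂ) * poch ((m:ℂ)+1-a) n / ((m+n)! : ℂ)
            * ∑ j ∈ range (m+n+1), poch (-((m+n : ℕ):ℂ)) j * poch (a-(m:ℂ)) j
                / (poch (a-(m:ℂ)-(n:ℂ)) j * (j ! : ℂ)) * (1-z)^j := by
          rw [Finset.mul_sum]
          apply Finset.sum_congr rfl
          intro j _
          ring
  rw [zpow_neg, zpow_natCast,
    show (m ! : ℂ) * poch ((m:ℂ)+1-a) n / ((m+n)! : ℂ) * (z^m)⁻¹ * hyp (m+n) (a-(m:ℂ)) (a-(m:ℂ)-(n:ℂ)) (1-z)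
      = (m ! : ℂ) * poch ((m:ℂ)+1-a) n / ((m+n)! : ℂ) * hyp (m+n) (a-(m:ℂ)) (a-(m:ℂ)-(n:ℂ)) (1-z) * (z^m)⁻¹ by ring,
    eq_mul_inv_iff_mul_eq₀ hzm]
  exact key
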